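/- Let C₁,…,C_N be closed convex sets in ℝ^d with nonempty intersection C. Let β̃^{(n)} ∈ ℬ be a sequence such that for every m and every x ∈ ℝ^d the sequence Q_{β̃^{(n)}} ∘ ⋯ ∘ Q_{β̃^{(m)}}(x) converges to an element of C as n → ∞. Let β^{(n)} ∈ ℬ satisfy ∑_{n=1}^∞ ∑_{i=1}^N |β_i^{(n)} - β̃_i^{(n)}| < ∞. Then for every x ∈ ℝ^d the sequence Q_{β^{(n)}} ∘ ⋯ ∘ Q_{β^{(1)}}(x) converges to an element of C. -/

import Mathlib

/-- Proposition 2 (perturbation): if every tail trajectory of the unperturbed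
scheme `β̃^{(n)}` converges to a point of `C = ⋂ C_j`, and
`∑_n ∑_i |β_i^{(n)} - β̃_i^{(n)}| < ∞`, then every trajectory of the perturbed
scheme `β^{(n)}` converges to a point of `C`. -/
theorem stmt_11 {d N : ℕ}
    (C : Fin N → Set (EuclideanSpace ℝ (Fin d)))
    (hCconv : ∀ j, Convex ℝ (C j)) (hCcl : ∀ j, IsClosed (C j))
    (hne : (⋂ j, C j).Nonempty)
    (P : Fin N → EuclideanSpace ℝ (Fin d) → EuclideanSpace ℝ (Fin d))
    (hP : ∀ j x, P j x ∈ C j ∧ ∀ y ∈ C j, ‖x - P j x‖ ≤ ‖x - y‖)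
    (βt : ℕ → Fin N → ℝ)
    (hβt0 : ∀ n j, 0 ≤ βt n j) (hβt2 : ∀ n, ∑ j, βt n j ≤ 2)
    (hconv : ∀ (m : ℕ) (u : ℕ → EuclideanSpace ℝ (Fin d)),
      (∀ n, m ≤ n → u (n + 1) = u n - ∑ j, βt (n + 1) j • (u n - P j (u n))) →
      ∃ c ∈ ⋂ j, C j, Filter.Tendsto u Filter.atTop (nhds c))
    (β : ℕ → Fin N → ℝ)
    (hβ0 : ∀ n j, 0 ≤ β n j) (hβ2 : ∀ n, ∑ j, β n j ≤ 2)
    (hsum : Summable fun n => ∑ i, |β n i - βt n i|)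
    (x : ℕ → EuclideanSpace ℝ (Fin d))
    (hx : ∀ n, x (n + 1) = x n - ∑ j, β (n + 1) j • (x n - P j (x n))) :
    ∃ c ∈ ⋂ j, C j, Filter.Tendsto x Filter.atTop (nhds c) := by
  classical
  obtain ⟨c₀, hc₀⟩ := hne
  have hc₀j : ∀ j, c₀ ∈ C j := fun j => Set.mem_iInter.1 hc₀ j
  set Q : (Fin N → ℝ) → EuclideanSpace ℝ (Fin d) → EuclideanSpace ℝ (Fin d) :=
    fun b y => y - ∑ j, b j • (y - P j y) with hQdef
  have hxQ : ∀ n, x (n + 1) = Q (β (n + 1)) (x n) := fun n => hx n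
  -- variational inequality for projections
  have hVI : ∀ j (y : EuclideanSpace ℝ (Fin d)), ∀ w ∈ C j,
      inner ℝ (y - P j y) (w - P j y) ≤ (0 : ℝ) := by
    intro j y w hw
    have hmem := (hP j y).1
    have hEq : ‖y - P j y‖ = ⨅ w : C j, ‖y - (w : EuclideanSpace ℝ (Fin d))‖ := by
      haveI : Nonempty (C j) := ⟨⟨P j y, hmem⟩⟩
      refine le_antisymm (le_ciInf fun w => (hP j y).2 w w.2) ?_
      refine ciInf_le ⟨0, ?_⟩ (⟨P j y, hmem⟩ : C j)
      rintro r ⟨w, rfl⟩; exact norm_nonneg _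
    exact ((norm_eq_iInf_iff_real_inner_le_zero (hCconv j) hmem).1 hEq) w hw
  -- projections fix points of the sets
  have hPfix : ∀ j, ∀ c ∈ C j, P j c = c := by
    intro j c hc
    have h := (hP j c).2 c hc
    simp only [sub_self, norm_zero] at h
    have h0 : ‖c - P j c‖ = 0 := le_antisymm h (norm_nonneg _)
    have := sub_eq_zero.1 (norm_eq_zero.1 h0)
    exact this.symm
  have hQfix : ∀ b, Q b c₀ = c₀ := by
    intro b
    simp [hQdef, hPfix _ c₀ (hc₀j _)]
  -- firm nonexpansiveness
  have hfirm : ∀ j (y z : EuclideanSpace ℝ (Fin d)),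
      ‖P j y - P j z‖ ^ 2 ≤ inner ℝ (y - z) (P j y - P j z) := by
    intro j y z
    have h1 := hVI j y (P j z) (hP j z).1
    have h2 := hVI j z (P j y) (hP j y).1
    have e : inner ℝ (y - z) (P j y - P j z) - ‖P j y - P j z‖ ^ 2
        = - inner ℝ (y - P j y) (P j z - P j y) - inner ℝ (z - P j z) (P j y - P j z) := by
      rw [← real_inner_self_eq_norm_sq]
      simp only [inner_sub_left, inner_sub_right, inner_neg_left, inner_neg_right]
      linarith [real_inner_comm (P j y) y, real_inner_comm (P j z) y,
        real_inner_comm (P j y) z, real_inner_comm (P j z) z,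
        real_inner_comm (P j y) (P j z)]
    nlinarith [h1, h2, e]
  -- reflections are nonexpansive
  have hrefl : ∀ j (y z : EuclideanSpace ℝ (Fin d)),
      ‖((2:ℝ) • P j y - y) - ((2:ℝ) • P j z - z)‖ ≤ ‖y - z‖ := by
    intro j y z
    have hf := hfirm j y z
    have hco := real_inner_comm (P j y - P j z) (y - z)
    have hsq : ‖((2:ℝ) • P j y - y) - ((2:ℝ) • P j z - z)‖ ^ 2 ≤ ‖y - z‖ ^ 2 := by
      have hrw : ((2:ℝ) • P j y - y) - ((2:ℝ) • P j z - z)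
          = (2:ℝ) • (P j y - P j z) - (y - z) := by module
      rw [hrw, norm_sub_sq_real, norm_smul, real_inner_smul_left]
      have hn : ‖(2:ℝ)‖ = 2 := by norm_num
      rw [hn]
      nlinarith [norm_nonneg (P j y - P j z)]
    nlinarith [norm_nonneg (((2:ℝ) • P j y - y) - ((2:ℝ) • P j z - z)), norm_nonneg (y - z)]
  -- Q is nonexpansive
  have hQne : ∀ (b : Fin N → ℝ), (∀ j, 0 ≤ b j) → (∑ j, b j ≤ 2) →
      ∀ y z, ‖Q b y - Q b z‖ ≤ ‖y - z‖ := by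
    intro b hb0 hb2 y z
    have hs0 : (0:ℝ) ≤ ∑ j, b j := Finset.sum_nonneg fun j _ => hb0 j
    have hdecomp : Q b y - Q b z = (1 - (∑ j, b j) / 2) • (y - z)
        + ∑ j, (b j / 2) • (((2:ℝ) • P j y - y) - ((2:ℝ) • P j z - z)) := by
      have e2 : ∑ j, (b j / 2) • (((2:ℝ) • P j y - y) - ((2:ℝ) • P j z - z))
          = ∑ j, (b j • P j y - b j • P j z - (b j / 2) • y + (b j / 2) • z) :=
        Finset.sum_congr rfl fun j _ => by match_scalars <;> ring
      have hhalf : ∀ w : EuclideanSpace ℝ (Fin d),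
          ∑ j, (b j / 2) • w = ((∑ j, b j) / 2) • w := by
        intro w; rw [Finset.sum_div, Finset.sum_smul]
      have eA : ∑ j, b j • (y - P j y) = (∑ j, b j) • y - ∑ j, b j • P j y := by
        simp [smul_sub, Finset.sum_sub_distrib, Finset.sum_smul]
      have eB : ∑ j, b j • (z - P j z) = (∑ j, b j) • z - ∑ j, b j • P j z := by
        simp [smul_sub, Finset.sum_sub_distrib, Finset.sum_smul]
      have eC : ∑ j, (b j / 2) • (((2:ℝ) • P j y - y) - ((2:ℝ) • P j z - z))
          = ((∑ j, b j • P j y) - (∑ j, b j • P j z))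
            - ((∑ j, b j) / 2) • y + ((∑ j, b j) / 2) • z := by
        rw [e2]
        simp only [Finset.sum_add_distrib, Finset.sum_sub_distrib]
        rw [hhalf y, hhalf z]
      simp only [hQdef]
      rw [eA, eB, eC]
      match_scalars <;> ring
    rw [hdecomp]
    have h1 : ‖(1 - (∑ j, b j) / 2) • (y - z)‖ = (1 - (∑ j, b j) / 2) * ‖y - z‖ := by
      rw [norm_smul, Real.norm_of_nonneg (by linarith)]
    have h2 : ‖∑ j, (b j / 2) • (((2:ℝ) • P j y - y) - ((2:ℝ) • P j z - z))‖
        ≤ ((∑ j, b j) / 2) * ‖y - z‖ := by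
      calc ‖∑ j, (b j / 2) • (((2:ℝ) • P j y - y) - ((2:ℝ) • P j z - z))‖
          ≤ ∑ j, ‖(b j / 2) • (((2:ℝ) • P j y - y) - ((2:ℝ) • P j z - z))‖ :=
            norm_sum_le _ _
        _ ≤ ∑ j, (b j / 2) * ‖y - z‖ := by
            refine Finset.sum_le_sum fun j _ => ?_
            rw [norm_smul, Real.norm_of_nonneg (by linarith [hb0 j])]
            exact mul_le_mul_of_nonneg_left (hrefl j y z) (by linarith [hb0 j])
        _ = ((∑ j, b j) / 2) * ‖y - z‖ := by
            rw [← Finset.sum_mul, ← Finset.sum_div]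
    calc ‖(1 - (∑ j, b j) / 2) • (y - z)
          + ∑ j, (b j / 2) • (((2:ℝ) • P j y - y) - ((2:ℝ) • P j z - z))‖
        ≤ ‖(1 - (∑ j, b j) / 2) • (y - z)‖
          + ‖∑ j, (b j / 2) • (((2:ℝ) • P j y - y) - ((2:ℝ) • P j z - z))‖ :=
          norm_add_le _ _
      _ ≤ (1 - (∑ j, b j) / 2) * ‖y - z‖ + ((∑ j, b j) / 2) * ‖y - z‖ := by
          rw [h1]; linarith [h2]
      _ = ‖y - z‖ := by ring
  -- perturbation estimate
  have hpert : ∀ (b b' : Fin N → ℝ) (y : EuclideanSpace ℝ (Fin d)),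
      ‖Q b y - Q b' y‖ ≤ (∑ i, |b i - b' i|) * ‖y - c₀‖ := by
    intro b b' y
    have hrw : Q b y - Q b' y = ∑ j, (b' j - b j) • (y - P j y) := by
      simp only [hQdef, sub_smul, Finset.sum_sub_distrib]
      abel
    rw [hrw]
    calc ‖∑ j, (b' j - b j) • (y - P j y)‖
        ≤ ∑ j, ‖(b' j - b j) • (y - P j y)‖ := norm_sum_le _ _
      _ ≤ ∑ j, |b j - b' j| * ‖y - c₀‖ := by
          refine Finset.sum_le_sum fun j _ => ?_
          rw [norm_smul, Real.norm_eq_abs, abs_sub_comm]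
          exact mul_le_mul_of_nonneg_left ((hP j y).2 c₀ (hc₀j j)) (abs_nonneg _)
      _ = (∑ i, |b i - b' i|) * ‖y - c₀‖ := (Finset.sum_mul _ _ _).symm
  -- boundedness of the trajectory
  set M : ℝ := ‖x 0 - c₀‖ with hMdef
  have hM0 : 0 ≤ M := norm_nonneg _
  have hMx : ∀ n, ‖x n - c₀‖ ≤ M := by
    intro n
    induction n with
    | zero => exact le_rfl
    | succ n ih =>
      rw [hxQ n]
      have h := hQne (β (n+1)) (hβ0 _) (hβ2 _) (x n) c₀
      rw [hQfix] at h
      linarith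
  -- the perturbation sizes
  set ε : ℕ → ℝ := fun n => ∑ i, |β n i - βt n i| with hεdef
  have hε0 : ∀ n, 0 ≤ ε n := fun n => Finset.sum_nonneg fun i _ => abs_nonneg _
  set δ : ℕ → ℝ := fun m => ∑' k, ε (k + (m + 1)) with hδdef
  have hδsummable : ∀ m, Summable fun k => ε (k + (m + 1)) :=
    fun m => (summable_nat_add_iff (m+1)).2 hsum
  have hδ0 : ∀ m, 0 ≤ δ m := fun m => tsum_nonneg fun k => hε0 _
  have hδto0 : Filter.Tendsto δ Filter.atTop (nhds 0) := by
    have heq : ∀ m, δ m = (∑' n, ε n) - ∑ i ∈ Finset.range (m+1), ε i := by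
      intro m
      have := Summable.sum_add_tsum_nat_add (f := ε) (m+1) hsum
      simp only [hδdef]
      linarith [this]
    have hps : Filter.Tendsto (fun m => ∑ i ∈ Finset.range (m+1), ε i)
        Filter.atTop (nhds (∑' n, ε n)) :=
      hsum.hasSum.tendsto_sum_nat.comp (Filter.tendsto_add_atTop_nat 1)
    have : Filter.Tendsto (fun m => (∑' n, ε n) - ∑ i ∈ Finset.range (m+1), ε i)
        Filter.atTop (nhds ((∑' n, ε n) - (∑' n, ε n))) :=
      (tendsto_const_nhds).sub hps
    simp only [sub_self] at this
    exact (funext heq : δ = _) ▸ this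
  have hIocδ : ∀ m n, ∑ k ∈ Finset.Ioc m n, ε k ≤ δ m := by
    intro m n
    have h1 : Finset.Ioc m n = Finset.Ico (m+1) (n+1) := by
      ext k; simp only [Finset.mem_Ioc, Finset.mem_Ico]; omega
    rw [h1, Finset.sum_Ico_eq_sum_range]
    have h2 : ∀ i, ε (m + 1 + i) = ε (i + (m+1)) := fun i => by rw [Nat.add_comm]
    simp only [h2]
    exact Summable.sum_le_tsum _ (fun i _ => hε0 _) (hδsummable m)
  -- key: for every m there is a limit point cm of the auxiliary trajectory
  have hkey : ∀ m : ℕ, ∃ cm ∈ ⋂ j, C j, ∀ ε' > (0:ℝ),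
      ∀ᶠ n in Filter.atTop, ‖x n - cm‖ < M * δ m + ε' := by
    intro m
    set u : ℕ → EuclideanSpace ℝ (Fin d) := fun n =>
      Nat.rec (x 0) (fun k ih => if k + 1 ≤ m then x (k+1) else Q (βt (k+1)) ih) n with hudef
    have huS : ∀ k, u (k+1) = if k + 1 ≤ m then x (k+1) else Q (βt (k+1)) (u k) :=
      fun k => rfl
    have hux : ∀ k, k ≤ m → u k = x k := by
      intro k
      induction k with
      | zero => intro _; rfl
      | succ k ih => intro h; rw [huS, if_pos h]
    have hurec : ∀ n, m ≤ n → u (n+1) = u n - ∑ j, βt (n+1) j • (u n - P j (u n)) := by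
      intro n hn
      rw [huS, if_neg (by omega)]
    obtain ⟨cm, hcmC, hcm⟩ := hconv m u hurec
    have hcomp : ∀ n, m ≤ n → ‖x n - u n‖ ≤ M * ∑ k ∈ Finset.Ioc m n, ε k := by
      intro n hn
      induction n, hn using Nat.le_induction with
      | base => simp [hux m le_rfl]
      | succ n hn ih =>
        have hxu : x (n+1) - u (n+1)
            = (Q (β (n+1)) (x n) - Q (βt (n+1)) (x n))
              + (Q (βt (n+1)) (x n) - Q (βt (n+1)) (u n)) := by
          rw [hxQ n, huS, if_neg (by omega)]
          abel
        have h1 : ‖Q (β (n+1)) (x n) - Q (βt (n+1)) (x n)‖ ≤ ε (n+1) * M := by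
          refine le_trans (hpert _ _ _) ?_
          exact mul_le_mul_of_nonneg_left (hMx n) (hε0 _)
        have h2 : ‖Q (βt (n+1)) (x n) - Q (βt (n+1)) (u n)‖ ≤ ‖x n - u n‖ :=
          hQne (βt (n+1)) (hβt0 _) (hβt2 _) _ _
        have h3 : ∑ k ∈ Finset.Ioc m (n+1), ε k = ∑ k ∈ Finset.Ioc m n, ε k + ε (n+1) :=
          Finset.sum_Ioc_succ_top hn ε
        calc ‖x (n+1) - u (n+1)‖
            ≤ ‖Q (β (n+1)) (x n) - Q (βt (n+1)) (x n)‖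
              + ‖Q (βt (n+1)) (x n) - Q (βt (n+1)) (u n)‖ := by
              rw [hxu]; exact norm_add_le _ _
          _ ≤ ε (n+1) * M + ‖x n - u n‖ := by linarith
          _ ≤ M * ∑ k ∈ Finset.Ioc m (n+1), ε k := by
              rw [h3]; ring_nf; linarith [ih]
    have hbnd : ∀ n, m ≤ n → ‖x n - u n‖ ≤ M * δ m := by
      intro n hn
      exact le_trans (hcomp n hn) (mul_le_mul_of_nonneg_left (hIocδ m n) hM0)
    refine ⟨cm, hcmC, fun ε' hε' => ?_⟩
    have hcm' : ∀ᶠ n in Filter.atTop, ‖u n - cm‖ < ε' := by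
      have := hcm
      rw [Metric.tendsto_atTop] at this
      obtain ⟨K, hK⟩ := this ε' hε'
      filter_upwards [Filter.eventually_ge_atTop K] with n hn
      have := hK n hn
      rwa [dist_eq_norm] at this
    filter_upwards [hcm', Filter.eventually_ge_atTop m] with n h1 h2
    calc ‖x n - cm‖ ≤ ‖x n - u n‖ + ‖u n - cm‖ := by
          have : x n - cm = (x n - u n) + (u n - cm) := by abel
          rw [this]; exact norm_add_le _ _
      _ < M * δ m + ε' := by
          have := hbnd n h2
          linarith
  -- M * δ m → 0
  have hMδ : Filter.Tendsto (fun m => M * δ m) Filter.atTop (nhds 0) := by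
    have := hδto0.const_mul M
    simpa using this
  -- x is Cauchy
  have hcauchy : CauchySeq x := by
    rw [Metric.cauchySeq_iff]
    intro εc hεc
    have hev : ∀ᶠ m in Filter.atTop, M * δ m < εc / 4 := by
      have := hMδ
      rw [Metric.tendsto_atTop] at this
      obtain ⟨K, hK⟩ := this (εc / 4) (by linarith)
      filter_upwards [Filter.eventually_ge_atTop K] with m hm
      have := hK m hm
      rw [Real.dist_eq, sub_zero] at this
      calc M * δ m ≤ |M * δ m| := le_abs_self _
        _ < εc / 4 := this
    obtain ⟨m, hm⟩ := hev.exists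
    obtain ⟨cm, _, hcm⟩ := hkey m
    obtain ⟨K, hK⟩ := Filter.eventually_atTop.1 (hcm (εc / 4) (by linarith))
    refine ⟨K, fun n hn n' hn' => ?_⟩
    have h1 := hK n hn
    have h2 := hK n' hn'
    rw [dist_eq_norm]
    calc ‖x n - x n'‖ ≤ ‖x n - cm‖ + ‖x n' - cm‖ := by
          have : x n - x n' = (x n - cm) - (x n' - cm) := by abel
          rw [this]; exact norm_sub_le _ _
      _ < εc := by linarith
  obtain ⟨c, hc⟩ := cauchySeq_tendsto_of_complete hcauchy
  refine ⟨c, ?_, hc⟩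
  -- c belongs to the closed set ⋂ C j
  have hScl : IsClosed (⋂ j, C j) := isClosed_iInter hCcl
  rw [← hScl.closure_eq]
  rw [Metric.mem_closure_iff]
  intro εc hεc
  have hev : ∀ᶠ m in Filter.atTop, M * δ m < εc / 4 := by
    have := hMδ
    rw [Metric.tendsto_atTop] at this
    obtain ⟨K, hK⟩ := this (εc / 4) (by linarith)
    filter_upwards [Filter.eventually_ge_atTop K] with m hm
    have := hK m hm
    rw [Real.dist_eq, sub_zero] at this
    calc M * δ m ≤ |M * δ m| := le_abs_self _
      _ < εc / 4 := this
  obtain ⟨m, hm⟩ := hev.exists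
  obtain ⟨cm, hcmC, hcm⟩ := hkey m
  refine ⟨cm, hcmC, ?_⟩
  have hlim : Filter.Tendsto (fun n => ‖x n - cm‖) Filter.atTop (nhds ‖c - cm‖) :=
    ((hc.sub tendsto_const_nhds).norm)
  have hle : ‖c - cm‖ ≤ M * δ m + εc / 4 := by
    refine le_of_tendsto hlim ?_
    filter_upwards [hcm (εc / 4) (by linarith)] with n hn
    exact le_of_lt hn
  rw [dist_eq_norm]
  linarith
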